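/- Let x be a chain-point for the chain V_0 ⊊ V_1 ⊊ … ⊊ V_k. Then there exists a Gao-tree T of G all of whose edges lie in the support of x, i.e., x_e > 0 for every e ∈ T. -/

import Mathlib

open Finset
open scoped Classical

variable {V : Type*} [Fintype V]

/-- The set of edges of `G` with one endpoint in `S₁` and the other in `S₂`. -/
noncomputable def cutBetween (G : SimpleGraph V) (S₁ S₂ : Finset V) : Finset (Sym2 V) :=
  G.edgeFinset.filter (fun e => ∃ u v, e = s(u, v) ∧ u ∈ S₁ ∧ v ∈ S₂)

/-- The cut `δ(S)`: edges of `G` with exactly one endpoint in `S`. -/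
noncomputable def cut (G : SimpleGraph V) (S : Finset V) : Finset (Sym2 V) :=
  cutBetween G S Sᶜ

/-- `E(S)`: edges of `G` with both endpoints in `S`. -/
noncomputable def inducedEdges (G : SimpleGraph V) (S : Finset V) : Finset (Sym2 V) :=
  G.edgeFinset.filter (fun e => ∀ v ∈ e, v ∈ S)

/-- `T` is the edge set of a spanning tree of `G`. -/
def IsSpanningTree (G : SimpleGraph V) (T : Finset (Sym2 V)) : Prop :=
  (T : Set (Sym2 V)) ⊆ G.edgeSet ∧ (SimpleGraph.fromEdgeSet (T : Set (Sym2 V))).IsTree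

/-- Characteristic vector of a set of edges. -/
noncomputable def chi (T : Finset (Sym2 V)) : Sym2 V → ℝ :=
  fun e => if e ∈ T then 1 else 0

/-- The spanning tree polytope `Sp(G)`. -/
noncomputable def spanningTreePolytope (G : SimpleGraph V) : Set (Sym2 V → ℝ) :=
  convexHull ℝ {x | ∃ T : Finset (Sym2 V), IsSpanningTree G T ∧ x = chi T}

/-- The level sets `L_i = V_i \ V_{i-1}` of a chain `V_0 ⊊ … ⊊ V_k` (with `V_{-1} = ∅`,
`V_{k+1} = V`). -/
noncomputable def level (Vc : ℕ → Finset V) (k : ℕ) : ℕ → Finset V :=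
  fun i => if i = 0 then Vc 0 else if i ≤ k then Vc i \ Vc (i - 1) else Finset.univ \ Vc k

/-- `x` is a chain-point for the chain `V_0 ⊊ … ⊊ V_k`. -/
def IsChainPoint (G : SimpleGraph V) (Vc : ℕ → Finset V) (k : ℕ) (x : Sym2 V → ℝ) : Prop :=
  x ∈ spanningTreePolytope G ∧
  (∑ e ∈ cut G (Vc 0), x e) = 1 ∧
  (∑ e ∈ cut G (Vc k), x e) = 1 ∧
  (∀ i, 1 ≤ i → i ≤ k - 1 → (∑ e ∈ cut G (Vc i), x e) < 2) ∧
  (∀ i, 1 ≤ i → i ≤ k →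
    (∑ v ∈ level Vc k i, ∑ e ∈ cut G {v}, x e) = 2 * ((level Vc k i).card : ℝ))

/-- A Gao-tree for the chain `V_0 ⊊ … ⊊ V_k`: a spanning tree meeting each cut `δ(V_i)`
in exactly one edge. -/
def IsGaoTree (G : SimpleGraph V) (Vc : ℕ → Finset V) (k : ℕ) (T : Finset (Sym2 V)) : Prop :=
  IsSpanningTree G T ∧ ∀ i ≤ k, (T ∩ cut G (Vc i)).card = 1

/-- A Gao-tree for the subchain of `V_0 ⊊ … ⊊ V_k` given by the index set `I`. -/
def IsGaoTreeOn (G : SimpleGraph V) (Vc : ℕ → Finset V) (I : Finset ℕ)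
    (T : Finset (Sym2 V)) : Prop :=
  IsSpanningTree G T ∧ ∀ i ∈ I, (T ∩ cut G (Vc i)).card = 1

/-- `Sp_𝒞(G)`: the convex hull of characteristic vectors of Gao-trees. -/
noncomputable def gaoPolytope (G : SimpleGraph V) (Vc : ℕ → Finset V) (k : ℕ) :
    Set (Sym2 V → ℝ) :=
  convexHull ℝ {x | ∃ T : Finset (Sym2 V), IsGaoTree G Vc k T ∧ x = chi T}

/-- `F` is the edge set of a spanning tree of the induced subgraph `G(U)`. -/
def IsSpanningTreeOfInduced (G : SimpleGraph V) (U : Finset V) (F : Finset (Sym2 V)) : Prop :=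
  (F : Set (Sym2 V)) ⊆ G.edgeSet ∧ (∀ e ∈ F, ∀ v ∈ e, v ∈ U) ∧
  F.card = U.card - 1 ∧
  ∀ u ∈ U, ∀ v ∈ U, (SimpleGraph.fromEdgeSet (F : Set (Sym2 V))).Reachable u v

/-- The rank of `X` in the cycle matroid of `G`. -/
noncomputable def cycleRank (G : SimpleGraph V) (X : Finset (Sym2 V)) : ℕ :=
  (G.edgeFinset.powerset.filter (fun T => IsSpanningTree G T)).sup (fun T => (T ∩ X).card)

/-- The rank of `X` in the matroid whose bases are the Gao-trees. -/
noncomputable def gaoRank (G : SimpleGraph V) (Vc : ℕ → Finset V) (k : ℕ)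
    (X : Finset (Sym2 V)) : ℕ :=
  (G.edgeFinset.powerset.filter (fun T => IsGaoTree G Vc k T)).sup (fun T => (T ∩ X).card)

/-- `x` is a solution of the `s`–`t` path TSP subtour elimination LP. -/
def IsSubtourLPSolution (G : SimpleGraph V) (s t : V) (x : Sym2 V → ℝ) : Prop :=
  x ∈ spanningTreePolytope G ∧
  (∀ v, v ≠ s → v ≠ t → (∑ e ∈ cut G {v}, x e) = 2) ∧
  (∑ e ∈ cut G {s}, x e) = 1 ∧ (∑ e ∈ cut G {t}, x e) = 1

/-- Rank function of a matroid on a finite ground set, as a function on finsets. -/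
noncomputable def mrank {E : Type*} [Fintype E] (M : Matroid E) (X : Finset E) : ℕ :=
  (X.powerset.filter (fun I : Finset E => M.Indep (I : Set E))).sup Finset.card

/-- Convex hull of characteristic vectors of independent sets of a matroid. -/
noncomputable def indepPolytope {E : Type*} [Fintype E] (M : Matroid E) : Set (E → ℝ) :=
  convexHull ℝ {x | ∃ I : Finset E, M.Indep (I : Set E) ∧
    x = fun e => if e ∈ I then (1 : ℝ) else 0}

section GaoAux

variable {V : Type*} [Fintype V]

private lemma acyclic_anti' {G G' : SimpleGraph V} (h : G ≤ G') (h' : G'.IsAcyclic) :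
    G.IsAcyclic :=
  fun _v c hc => h' (c.mapLe h) ((SimpleGraph.Walk.mapLe_isCycle h).2 hc)

/-- A forest whose edges all lie inside `S` has at most `|S| - 1` edges. -/
private lemma forest_count' : ∀ (n : ℕ) (F : Finset (Sym2 V)) (S : Finset V), F.card = n →
    (SimpleGraph.fromEdgeSet (F : Set (Sym2 V))).IsAcyclic →
    (∀ e ∈ F, ¬ e.IsDiag) → (∀ e ∈ F, ∀ v ∈ e, v ∈ S) → S.Nonempty →
    F.card + 1 ≤ S.card := by
  intro n
  induction n using Nat.strong_induction_on with
  | _ n ih =>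
  intro F S hcard hacy hdiag hFS hS
  rcases F.eq_empty_or_nonempty with rfl | ⟨e, he⟩
  · simpa using hS.card_pos
  induction e using Sym2.ind with
  | _ a b =>
  have hab : a ≠ b := fun h => hdiag _ he (by simp [h])
  have hKadj : (SimpleGraph.fromEdgeSet (F : Set (Sym2 V))).Adj a b := by
    rw [SimpleGraph.fromEdgeSet_adj]; exact ⟨by exact_mod_cast he, hab⟩
  have hbr := SimpleGraph.isAcyclic_iff_forall_adj_isBridge.1 hacy hKadj
  rw [SimpleGraph.isBridge_iff] at hbr
  set K' := (SimpleGraph.fromEdgeSet (F : Set (Sym2 V))) \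
      SimpleGraph.fromEdgeSet {s(a,b)} with hK'
  set R : V → Prop := fun v => K'.Reachable a v with hR
  have hstep : ∀ u v : V, s(u,v) ∈ F → s(u,v) ≠ s(a,b) → R u → R v := by
    intro u v huv hne hu
    refine hu.trans (SimpleGraph.Adj.reachable ?_)
    have huvne : u ≠ v := fun h => hdiag _ huv (by simp [h])
    rw [hK', SimpleGraph.sdiff_adj, SimpleGraph.fromEdgeSet_adj, SimpleGraph.fromEdgeSet_adj]
    exact ⟨⟨by exact_mod_cast huv, huvne⟩, by simp [hne]⟩
  have hdichot : ∀ f ∈ F.erase s(a,b), (∀ v ∈ f, R v) ∨ (∀ v ∈ f, ¬ R v) := by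
    intro f hf
    induction f using Sym2.ind with
    | _ u v =>
    have hfF : s(u,v) ∈ F := Finset.mem_of_mem_erase hf
    have hfne : s(u,v) ≠ s(a,b) := Finset.ne_of_mem_erase hf
    by_cases hu : R u
    · left
      have hv : R v := hstep u v hfF hfne hu
      intro w hw; rcases Sym2.mem_iff.1 hw with rfl | rfl <;> assumption
    · right
      by_cases hv : R v
      · exact absurd (hstep v u (by rwa [Sym2.eq_swap]) (by rw [Sym2.eq_swap]; exact hfne) hv) hu
      · intro w hw; rcases Sym2.mem_iff.1 hw with rfl | rfl <;> assumption
  set A : Finset V := S.filter R with hA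
  set B : Finset V := S \ A with hB
  set FA : Finset (Sym2 V) := (F.erase s(a,b)).filter (fun f => ∀ v ∈ f, R v) with hFA
  set FB : Finset (Sym2 V) := (F.erase s(a,b)).filter (fun f => ∀ v ∈ f, ¬ R v) with hFB
  have haS : a ∈ S := hFS _ he a (by simp)
  have hbS : b ∈ S := hFS _ he b (by simp)
  have haA : a ∈ A := by
    rw [hA, Finset.mem_filter]; exact ⟨haS, SimpleGraph.Reachable.refl a⟩
  have hbB : b ∈ B := by
    rw [hB, Finset.mem_sdiff, hA, Finset.mem_filter]
    exact ⟨hbS, fun h => hbr h.2⟩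
  have hunion : F.erase s(a,b) = FA ∪ FB := by
    ext f
    simp only [hFA, hFB, Finset.mem_union, Finset.mem_filter]
    constructor
    · intro hf; rcases hdichot f hf with h | h
      · exact Or.inl ⟨hf, h⟩
      · exact Or.inr ⟨hf, h⟩
    · rintro (⟨hf, _⟩ | ⟨hf, _⟩) <;> exact hf
  have hdisj : Disjoint FA FB := by
    rw [Finset.disjoint_left]
    intro f hfa hfb
    rw [hFA, Finset.mem_filter] at hfa
    rw [hFB, Finset.mem_filter] at hfb
    induction f using Sym2.ind with
    | _ u v => exact hfb.2 u (by simp) (hfa.2 u (by simp))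
  have hcard_erase : (F.erase s(a,b)).card < n := by
    rw [← hcard]; exact Finset.card_erase_lt_of_mem he
  have hacyA : (SimpleGraph.fromEdgeSet (FA : Set (Sym2 V))).IsAcyclic := by
    refine acyclic_anti' (SimpleGraph.fromEdgeSet_mono ?_) hacy
    intro f hf
    exact_mod_cast Finset.mem_coe.2 (Finset.mem_of_mem_erase
      (Finset.mem_of_mem_filter _ (by exact_mod_cast hf)))
  have hacyB : (SimpleGraph.fromEdgeSet (FB : Set (Sym2 V))).IsAcyclic := by
    refine acyclic_anti' (SimpleGraph.fromEdgeSet_mono ?_) hacy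
    intro f hf
    exact_mod_cast Finset.mem_coe.2 (Finset.mem_of_mem_erase
      (Finset.mem_of_mem_filter _ (by exact_mod_cast hf)))
  have hIA : FA.card + 1 ≤ A.card := by
    refine ih FA.card ?_ FA A rfl hacyA ?_ ?_ ⟨a, haA⟩
    · calc FA.card ≤ (F.erase s(a,b)).card := Finset.card_le_card (Finset.filter_subset _ _)
        _ < n := hcard_erase
    · intro f hf; exact hdiag f (Finset.mem_of_mem_erase (Finset.mem_of_mem_filter _ hf))
    · intro f hf v hv
      rw [hFA, Finset.mem_filter] at hf
      rw [hA, Finset.mem_filter]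
      exact ⟨hFS f (Finset.mem_of_mem_erase hf.1) v hv, hf.2 v hv⟩
  have hIB : FB.card + 1 ≤ B.card := by
    refine ih FB.card ?_ FB B rfl hacyB ?_ ?_ ⟨b, hbB⟩
    · calc FB.card ≤ (F.erase s(a,b)).card := Finset.card_le_card (Finset.filter_subset _ _)
        _ < n := hcard_erase
    · intro f hf; exact hdiag f (Finset.mem_of_mem_erase (Finset.mem_of_mem_filter _ hf))
    · intro f hf v hv
      rw [hFB, Finset.mem_filter] at hf
      rw [hB, Finset.mem_sdiff, hA, Finset.mem_filter]
      exact ⟨hFS f (Finset.mem_of_mem_erase hf.1) v hv, fun h => hf.2 v hv h.2⟩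
  have h1 : (F.erase s(a,b)).card = FA.card + FB.card := by
    rw [hunion, Finset.card_union_of_disjoint hdisj]
  have h2 : (F.erase s(a,b)).card + 1 = F.card := Finset.card_erase_add_one he
  have h3 : A.card + B.card = S.card := by
    have hsub : A ⊆ S := by rw [hA]; exact Finset.filter_subset _ _
    rw [hB, Finset.card_sdiff_of_subset hsub]
    have := Finset.card_le_card hsub
    omega
  omega

/-- Every connected graph given by a finite edge set contains a spanning tree. -/
private lemma exists_tree_subset' : ∀ (n : ℕ) (W : Finset (Sym2 V)), W.card = n →
    (SimpleGraph.fromEdgeSet (W : Set (Sym2 V))).Connected →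
    ∃ T ⊆ W, (SimpleGraph.fromEdgeSet (T : Set (Sym2 V))).IsTree := by
  intro n
  induction n using Nat.strong_induction_on with
  | _ n ih =>
  intro W hn hconn
  by_cases hacy : (SimpleGraph.fromEdgeSet (W : Set (Sym2 V))).IsAcyclic
  · exact ⟨W, subset_rfl, ⟨hconn, hacy⟩⟩
  rw [SimpleGraph.isAcyclic_iff_forall_adj_isBridge] at hacy
  push_neg at hacy
  obtain ⟨v, w, hadj, hbr⟩ := hacy
  rw [SimpleGraph.isBridge_iff] at hbr
  push_neg at hbr
  have hreach := hbr
  have heW : s(v,w) ∈ W := by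
    have := (SimpleGraph.fromEdgeSet_adj _).1 hadj
    exact_mod_cast this.1
  have hW' : SimpleGraph.fromEdgeSet ((W.erase s(v,w) : Finset (Sym2 V)) : Set (Sym2 V)) =
      SimpleGraph.fromEdgeSet (W : Set (Sym2 V)) \ SimpleGraph.fromEdgeSet {s(v,w)} := by
    ext u₁ u₂
    simp only [SimpleGraph.fromEdgeSet_adj, SimpleGraph.sdiff_adj, Finset.coe_erase,
      Set.mem_diff, Set.mem_singleton_iff, Finset.mem_coe]
    tauto
  set K' := SimpleGraph.fromEdgeSet (W : Set (Sym2 V)) \ SimpleGraph.fromEdgeSet {s(v,w)}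
    with hK'
  have hstep : ∀ p q : V, (SimpleGraph.fromEdgeSet (W : Set (Sym2 V))).Adj p q →
      K'.Reachable p q := by
    intro p q hpq
    by_cases he' : s(p,q) = s(v,w)
    · rcases Sym2.eq_iff.1 he' with ⟨rfl, rfl⟩ | ⟨rfl, rfl⟩
      · exact hreach
      · exact hreach.symm
    · refine SimpleGraph.Adj.reachable ?_
      rw [hK', SimpleGraph.sdiff_adj]
      exact ⟨hpq, by rw [SimpleGraph.fromEdgeSet_adj]; simp [he']⟩
  have hconn' : K'.Connected := by
    have hpre : K'.Preconnected := by
      intro p q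
      refine (hconn.preconnected p q).elim fun wlk => ?_
      clear hn
      induction wlk with
      | nil => exact SimpleGraph.Reachable.refl _
      | cons h wlk ih' => exact (hstep _ _ h).trans ih'
    haveI := hconn.nonempty
    exact ⟨hpre⟩
  rw [← hW'] at hconn'
  obtain ⟨T, hTsub, hT⟩ := ih (W.erase s(v,w)).card
    (by rw [← hn]; exact Finset.card_erase_lt_of_mem heW) _ rfl hconn'
  exact ⟨T, hTsub.trans (Finset.erase_subset _ _), hT⟩

/-- A connected spanning subgraph crosses every nontrivial cut. -/
private lemma exists_crossing_edge' {T : Finset (Sym2 V)}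
    (hconn : (SimpleGraph.fromEdgeSet (T : Set (Sym2 V))).Connected)
    {S : Finset V} (hS : S.Nonempty) (hS' : ∃ v, v ∉ S) :
    ∃ a b, s(a,b) ∈ T ∧ a ∈ S ∧ b ∉ S := by
  obtain ⟨u, hu⟩ := hS
  obtain ⟨v, hv⟩ := hS'
  refine (hconn.preconnected u v).elim fun wlk => ?_
  obtain ⟨d, _, h1, h2⟩ := wlk.exists_boundary_dart (↑S) (by simpa) (by simpa)
  have hadj := d.adj
  rw [SimpleGraph.fromEdgeSet_adj] at hadj
  exact ⟨d.toProd.1, d.toProd.2, by exact_mod_cast hadj.1, by simpa using h1,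
    by simpa using h2⟩

private lemma mem_cut_iff' {G : SimpleGraph V} {S : Finset V} {a b : V}
    (hab : s(a,b) ∈ G.edgeFinset) :
    s(a,b) ∈ cut G S ↔ ((a ∈ S ∧ b ∉ S) ∨ (b ∈ S ∧ a ∉ S)) := by
  have hne : a ≠ b := (G.mem_edgeSet.1 (SimpleGraph.mem_edgeFinset.1 hab)).ne
  unfold cut cutBetween
  rw [Finset.mem_filter]
  simp only [hab, true_and, Finset.mem_compl]
  constructor
  · rintro ⟨u, w, huw, hu, hw⟩
    rcases Sym2.eq_iff.1 huw with ⟨rfl, rfl⟩ | ⟨rfl, rfl⟩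
    · exact Or.inl ⟨hu, hw⟩
    · exact Or.inr ⟨hu, hw⟩
  · rintro (⟨h1, h2⟩ | ⟨h1, h2⟩)
    · exact ⟨a, b, rfl, h1, h2⟩
    · exact ⟨b, a, Sym2.eq_swap, h1, h2⟩

private lemma mem_inducedEdges_iff' {G : SimpleGraph V} {S : Finset V} {a b : V}
    (hab : s(a,b) ∈ G.edgeFinset) :
    s(a,b) ∈ inducedEdges G S ↔ (a ∈ S ∧ b ∈ S) := by
  unfold inducedEdges
  rw [Finset.mem_filter]
  simp only [hab, true_and, Sym2.mem_iff]
  constructor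
  · intro h; exact ⟨h a (Or.inl rfl), h b (Or.inr rfl)⟩
  · rintro ⟨h1, h2⟩ v hv; rcases hv with rfl | rfl <;> assumption

private lemma cut_singleton' (G : SimpleGraph V) (v : V) :
    cut G {v} = G.edgeFinset.filter (fun e => v ∈ e) := by
  ext e
  unfold cut cutBetween
  simp only [Finset.mem_filter]
  refine and_congr_right fun he => ?_
  induction e using Sym2.ind with
  | _ a b =>
  have hne : a ≠ b := (G.mem_edgeSet.1 (SimpleGraph.mem_edgeFinset.1 he)).ne
  simp only [Sym2.mem_iff, Finset.mem_compl, Finset.mem_singleton]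
  constructor
  · rintro ⟨u, w, huw, hu, hw⟩
    rcases Sym2.eq_iff.1 huw with ⟨rfl, rfl⟩ | ⟨rfl, rfl⟩
    · exact Or.inl hu.symm
    · exact Or.inr hu.symm
  · rintro (rfl | rfl)
    · exact ⟨v, b, rfl, rfl, fun h => hne h.symm⟩
    · exact ⟨v, a, Sym2.eq_swap, rfl, fun h => hne h⟩

private lemma handshake' (G : SimpleGraph V) (x : Sym2 V → ℝ) (S : Finset V) :
    ∑ v ∈ S, ∑ e ∈ cut G {v}, x e
      = 2 * (∑ e ∈ inducedEdges G S, x e) + ∑ e ∈ cut G S, x e := by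
  have lhs : ∑ v ∈ S, ∑ e ∈ cut G {v}, x e
      = ∑ e ∈ G.edgeFinset, ((S.filter (fun v => v ∈ e)).card : ℝ) * x e := by
    have h1 : ∀ v : V, ∑ e ∈ cut G {v}, x e
        = ∑ e ∈ G.edgeFinset, if v ∈ e then x e else 0 := by
      intro v; rw [cut_singleton', Finset.sum_filter]
    simp_rw [h1]
    rw [Finset.sum_comm]
    refine Finset.sum_congr rfl fun e _ => ?_
    rw [← Finset.sum_filter, Finset.sum_const, nsmul_eq_mul]
  rw [lhs]
  unfold inducedEdges cut cutBetween
  rw [Finset.sum_filter, Finset.sum_filter, Finset.mul_sum, ← Finset.sum_add_distrib]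
  refine Finset.sum_congr rfl fun e he => ?_
  induction e using Sym2.ind with
  | _ a b =>
  have hne : a ≠ b := (G.mem_edgeSet.1 (SimpleGraph.mem_edgeFinset.1 he)).ne
  have hfilter : S.filter (fun v => v ∈ s(a,b))
      = (if a ∈ S then {a} else ∅) ∪ (if b ∈ S then {b} else ∅) := by
    ext u
    by_cases h1 : a ∈ S <;> by_cases h2 : b ∈ S <;>
      simp [h1, h2, Sym2.mem_iff] <;> aesop
  have hind : (∀ v ∈ s(a,b), v ∈ S) ↔ (a ∈ S ∧ b ∈ S) := by
    constructor
    · intro h; exact ⟨h a (by simp), h b (by simp)⟩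
    · rintro ⟨h1, h2⟩ v hv; rcases Sym2.mem_iff.1 hv with rfl | rfl <;> assumption
  have hcut : (∃ u w, s(a,b) = s(u,w) ∧ u ∈ S ∧ w ∈ Sᶜ) ↔
      ((a ∈ S ∧ b ∉ S) ∨ (b ∈ S ∧ a ∉ S)) := by
    constructor
    · rintro ⟨u, w, huw, hu, hw⟩
      rw [Finset.mem_compl] at hw
      rcases Sym2.eq_iff.1 huw with ⟨rfl, rfl⟩ | ⟨rfl, rfl⟩
      · exact Or.inl ⟨hu, hw⟩
      · exact Or.inr ⟨hu, hw⟩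
    · rintro (⟨h1, h2⟩ | ⟨h1, h2⟩)
      · exact ⟨a, b, rfl, h1, Finset.mem_compl.2 h2⟩
      · exact ⟨b, a, Sym2.eq_swap, h1, Finset.mem_compl.2 h2⟩
  simp only [hind, hcut, hfilter]
  have hc2 : (({a} : Finset V) ∪ {b}).card = 2 := by
    rw [Finset.card_union_of_disjoint (by simp [hne])]; simp
  by_cases ha : a ∈ S <;> by_cases hb : b ∈ S <;>
    simp [ha, hb, hc2, Finset.card_pair hne] <;> ring

end GaoAux

theorem stmt14 (G : SimpleGraph V) (hG : G.Connected)
    (Vc : ℕ → Finset V) (k : ℕ)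
    (hne : (Vc 0).Nonempty) (hchain : ∀ i < k, Vc i ⊂ Vc (i + 1))
    (htop : Vc k ⊂ Finset.univ)
    (x : Sym2 V → ℝ) (hx : IsChainPoint G Vc k x) :
    ∃ T : Finset (Sym2 V), IsGaoTree G Vc k T ∧ ∀ e ∈ T, 0 < x e := by
  obtain ⟨hxP, hx00, hxkk, hxmid, hxlev⟩ := hx
  rw [spanningTreePolytope, _root_.convexHull_eq] at hxP
  obtain ⟨ι, t, wt, z, hw0, hw1, hz, hcm⟩ := hxP
  choose! Tf hT1 hT2 using hz
  -- the convex decomposition, pointwise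
  have hxdef : ∀ e, x e = ∑ i ∈ t, wt i * (if e ∈ Tf i then 1 else 0) := by
    intro e
    rw [Finset.centerMass_eq_of_sum_1 _ _ hw1] at hcm
    have h := congrFun hcm e
    rw [← h, Finset.sum_apply]
    refine Finset.sum_congr rfl fun i hi => ?_
    rw [Pi.smul_apply, hT2 i hi]
    simp [chi, smul_eq_mul]
  set J := t.filter (fun i => 0 < wt i) with hJ
  have hJt : J ⊆ t := Finset.filter_subset _ _
  have hJpos : ∀ i ∈ J, 0 < wt i := fun i hi => (Finset.mem_filter.1 hi).2
  have hxdefJ : ∀ e, x e = ∑ i ∈ J, wt i * (if e ∈ Tf i then 1 else 0) := by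
    intro e
    rw [hxdef e, hJ]
    refine (Finset.sum_filter_of_ne fun i hi hne' => ?_).symm
    rcases (hw0 i hi).lt_or_eq with h | h
    · exact h
    · exact absurd (by rw [← h]; ring) hne'
  have hw1J : ∑ i ∈ J, wt i = 1 := by
    rw [← hw1, hJ]
    exact Finset.sum_filter_of_ne fun i hi hne' =>
      (hw0 i hi).lt_or_eq.resolve_right fun h => hne' h.symm
  have hJtree : ∀ i ∈ J, IsSpanningTree G (Tf i) := fun i hi => hT1 i (hJt hi)
  have hx0 : ∀ e, 0 ≤ x e := by
    intro e
    rw [hxdefJ]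
    refine Finset.sum_nonneg fun i hi => mul_nonneg (hJpos i hi).le ?_
    split_ifs <;> norm_num
  have hXF : ∀ F : Finset (Sym2 V),
      ∑ e ∈ F, x e = ∑ i ∈ J, wt i * ((Tf i ∩ F).card : ℝ) := by
    intro F
    calc ∑ e ∈ F, x e = ∑ e ∈ F, ∑ i ∈ J, wt i * (if e ∈ Tf i then 1 else 0) := by
          exact Finset.sum_congr rfl fun e _ => hxdefJ e
      _ = ∑ i ∈ J, ∑ e ∈ F, wt i * (if e ∈ Tf i then 1 else 0) := Finset.sum_comm
      _ = ∑ i ∈ J, wt i * ((Tf i ∩ F).card : ℝ) := by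
          refine Finset.sum_congr rfl fun i _ => ?_
          rw [← Finset.mul_sum, Finset.sum_boole, Finset.filter_mem_eq_inter,
            Finset.inter_comm]
  have hsupp : ∀ i ∈ J, ∀ e ∈ Tf i, 0 < x e := by
    intro i hi e he
    rw [hxdefJ]
    have hle : wt i * (if e ∈ Tf i then (1:ℝ) else 0)
        ≤ ∑ j ∈ J, wt j * (if e ∈ Tf j then 1 else 0) := by
      refine Finset.single_le_sum (f := fun j => wt j * (if e ∈ Tf j then (1:ℝ) else 0))
        (fun j hj => mul_nonneg (hJpos j hj).le ?_) hi
      split_ifs <;> norm_num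
    rw [if_pos he, mul_one] at hle
    exact lt_of_lt_of_le (hJpos i hi) hle
  have hsupp_edge : ∀ e, 0 < x e → e ∈ G.edgeFinset := by
    intro e he
    by_contra hno
    have : x e = 0 := by
      rw [hxdefJ]
      refine Finset.sum_eq_zero fun i hi => ?_
      have : e ∉ Tf i := fun hmem =>
        hno (SimpleGraph.mem_edgeFinset.2 ((hJtree i hi).1 hmem))
      simp [this]
    linarith
  obtain ⟨v0, hv0⟩ := hne
  -- monotonicity of the chain
  have hVmono : ∀ i j, i ≤ j → j ≤ k → Vc i ⊆ Vc j := by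
    have key : ∀ d i, i + d ≤ k → Vc i ⊆ Vc (i + d) := by
      intro d
      induction d with
      | zero => intro i _; simp
      | succ d ihd =>
        intro i h
        refine (ihd i (by omega)).trans ?_
        have h2 := (hchain (i + d) (by omega)).subset
        rw [show i + (d + 1) = i + d + 1 by omega]
        exact h2
    intro i j hij hjk
    have := key (j - i) i (by omega)
    rwa [show i + (j - i) = j by omega] at this
  -- the level-index function
  have hlvlE : ∃ lvl : V → ℕ, (∀ v, lvl v ≤ k + 1) ∧
      (∀ v i, i ≤ k → (v ∈ Vc i ↔ lvl v ≤ i)) := by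
    refine ⟨fun v => if h : ∃ i, i ≤ k ∧ v ∈ Vc i then Nat.find h else k + 1,
      fun v => ?_, fun v i hik => ?_⟩
    · dsimp only
      split_ifs with h
      · exact (Nat.find_spec h).1.trans (Nat.le_succ k)
      · exact le_refl _
    · dsimp only
      constructor
      · intro hv
        rw [dif_pos ⟨i, hik, hv⟩]
        exact Nat.find_le ⟨hik, hv⟩
      · intro hle
        split_ifs at hle with h
        · exact hVmono _ i hle hik (Nat.find_spec h).2
        · omega
  obtain ⟨lvl, hlvl_top, hlvl_le⟩ := hlvlE
  have hlevel : ∀ i, i ≤ k + 1 → ∀ v, (v ∈ level Vc k i ↔ lvl v = i) := by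
    intro i hik v
    unfold level
    rcases Nat.eq_zero_or_pos i with rfl | hipos
    · rw [if_pos rfl, hlvl_le v 0 (Nat.zero_le k)]
      omega
    · rw [if_neg (by omega)]
      by_cases hik' : i ≤ k
      · rw [if_pos hik', Finset.mem_sdiff, hlvl_le v i hik', hlvl_le v (i-1) (by omega)]
        omega
      · rw [if_neg hik', Finset.mem_sdiff]
        have hk := hlvl_le v k le_rfl
        have htopv := hlvl_top v
        simp only [Finset.mem_univ, true_and]
        rw [hk]
        omega
  have hlevel0 : level Vc k 0 = Vc 0 := by unfold level; simp
  have hLne : ∀ i, i ≤ k + 1 → (level Vc k i).Nonempty := by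
    intro i hik
    rcases Nat.eq_zero_or_pos i with rfl | hipos
    · rw [hlevel0]; exact ⟨v0, hv0⟩
    by_cases hik' : i ≤ k
    · have hss := hchain (i-1) (by omega)
      rw [show i - 1 + 1 = i by omega] at hss
      obtain ⟨v, hv1, hv2⟩ := Finset.exists_of_ssubset hss
      refine ⟨v, ?_⟩
      unfold level
      rw [if_neg (by omega), if_pos hik', Finset.mem_sdiff]
      exact ⟨hv1, hv2⟩
    · obtain ⟨v, hv1, hv2⟩ := Finset.exists_of_ssubset htop
      refine ⟨v, ?_⟩
      unfold level
      rw [if_neg (by omega), if_neg hik', Finset.mem_sdiff]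
      exact ⟨Finset.mem_univ v, hv2⟩
  -- partition of the vertex set into levels
  have hdisjLev : (↑(Finset.range (k+2)) : Set ℕ).PairwiseDisjoint
      (fun i => level Vc k i) := by
    intro i hi j hj hij
    simp only [Finset.coe_range, Set.mem_Iio] at hi hj
    refine Finset.disjoint_left.2 fun v hvi hvj => ?_
    have h1 := (hlevel i (by omega) v).1 hvi
    have h2 := (hlevel j (by omega) v).1 hvj
    omega
  have hbiUnion : (Finset.range (k+2)).biUnion (fun i => level Vc k i) = Finset.univ := by
    ext v
    simp only [Finset.mem_biUnion, Finset.mem_range, Finset.mem_univ, iff_true]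
    exact ⟨lvl v, by have := hlvl_top v; omega,
      (hlevel (lvl v) (hlvl_top v) v).2 rfl⟩
  have hsum_split : ∀ g : V → ℝ,
      ∑ v, g v = ∑ i ∈ Finset.range (k+2), ∑ v ∈ level Vc k i, g v := by
    intro g
    rw [← hbiUnion, Finset.sum_biUnion hdisjLev]
  have hcard_split : Fintype.card V
      = ∑ i ∈ Finset.range (k+2), (level Vc k i).card := by
    rw [← Finset.card_univ, ← hbiUnion, Finset.card_biUnion]
    intro i hi j hj hij
    exact hdisjLev (by simpa using hi) (by simpa using hj) hij
  -- helper: edges of cuts are edges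
  have hcutE : ∀ (S : Finset V) e, e ∈ cut G S → e ∈ G.edgeFinset := by
    intro S e he
    unfold cut cutBetween at he
    exact (Finset.mem_filter.1 he).1
  have hindE : ∀ (S : Finset V) e, e ∈ inducedEdges G S → e ∈ G.edgeFinset := by
    intro S e he
    unfold inducedEdges at he
    exact (Finset.mem_filter.1 he).1
  -- forest bound in expectation
  have hfor : ∀ i ∈ J, ∀ S : Finset V, S.Nonempty →
      (Tf i ∩ inducedEdges G S).card + 1 ≤ S.card := by
    intro i hi S hS
    have hacy : (SimpleGraph.fromEdgeSet ((Tf i ∩ inducedEdges G S : Finset (Sym2 V)) :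
        Set (Sym2 V))).IsAcyclic := by
      refine acyclic_anti' (SimpleGraph.fromEdgeSet_mono ?_)
        (SimpleGraph.IsTree.IsAcyclic (hJtree i hi).2)
      exact_mod_cast (Finset.inter_subset_left : Tf i ∩ inducedEdges G S ⊆ Tf i)
    have hdiag : ∀ e ∈ Tf i ∩ inducedEdges G S, ¬ e.IsDiag := by
      intro e he
      exact SimpleGraph.not_isDiag_of_mem_edgeSet _
        ((hJtree i hi).1 (Finset.mem_coe.2 (Finset.mem_inter.1 he).1))
    have hins : ∀ e ∈ Tf i ∩ inducedEdges G S, ∀ v ∈ e, v ∈ S := by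
      intro e he v hv
      have h2 := (Finset.mem_inter.1 he).2
      unfold inducedEdges at h2
      exact (Finset.mem_filter.1 h2).2 v hv
    exact forest_count' _ _ S rfl hacy hdiag hins hS
  have hXind : ∀ S : Finset V, S.Nonempty →
      ∑ e ∈ inducedEdges G S, x e ≤ (S.card : ℝ) - 1 := by
    intro S hS
    rw [hXF]
    have hb : ∀ i ∈ J, ((Tf i ∩ inducedEdges G S).card : ℝ) ≤ (S.card : ℝ) - 1 := by
      intro i hi
      have hcount := hfor i hi S hS
      have h2 : ((Tf i ∩ inducedEdges G S).card + 1 : ℝ) ≤ (S.card : ℝ) := by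
        exact_mod_cast hcount
      linarith
    calc ∑ i ∈ J, wt i * ((Tf i ∩ inducedEdges G S).card : ℝ)
        ≤ ∑ i ∈ J, wt i * ((S.card : ℝ) - 1) :=
          Finset.sum_le_sum fun i hi => mul_le_mul_of_nonneg_left (hb i hi) (hJpos i hi).le
      _ = (S.card : ℝ) - 1 := by rw [← Finset.sum_mul, hw1J, one_mul]
  -- refined forest bound under a partition with no support edges across
  have hXind2 : ∀ S A : Finset V, A ⊆ S → A.Nonempty → (S \ A).Nonempty →
      (∀ a b, a ∈ A → b ∈ S \ A → ¬ 0 < x s(a,b)) →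
      ∑ e ∈ inducedEdges G S, x e ≤ (S.card : ℝ) - 2 := by
    intro S A hAS hA hSA hno
    rw [hXF]
    have hb : ∀ i ∈ J, ((Tf i ∩ inducedEdges G S).card : ℝ) ≤ (S.card : ℝ) - 2 := by
      intro i hi
      have hsplit : Tf i ∩ inducedEdges G S =
          (Tf i ∩ inducedEdges G A) ∪ (Tf i ∩ inducedEdges G (S \ A)) := by
        ext e
        simp only [Finset.mem_inter, Finset.mem_union]
        constructor
        · rintro ⟨heT, heI⟩
          have heE : e ∈ G.edgeFinset := hindE _ _ heI
          induction e using Sym2.ind with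
          | _ a b =>
          have hab := (mem_inducedEdges_iff' heE).1 heI
          have hpos : 0 < x s(a,b) := hsupp i hi _ heT
          by_cases haA : a ∈ A <;> by_cases hbA : b ∈ A
          · exact Or.inl ⟨heT, (mem_inducedEdges_iff' heE).2 ⟨haA, hbA⟩⟩
          · exact absurd hpos (hno a b haA (Finset.mem_sdiff.2 ⟨hab.2, hbA⟩))
          · have hx' : x s(a,b) = x s(b,a) := by rw [Sym2.eq_swap]
            rw [hx'] at hpos
            exact absurd hpos (hno b a hbA (Finset.mem_sdiff.2 ⟨hab.1, haA⟩))
          · exact Or.inr ⟨heT, (mem_inducedEdges_iff' heE).2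
              ⟨Finset.mem_sdiff.2 ⟨hab.1, haA⟩, Finset.mem_sdiff.2 ⟨hab.2, hbA⟩⟩⟩
        · rintro (⟨heT, heI⟩ | ⟨heT, heI⟩)
          · refine ⟨heT, ?_⟩
            unfold inducedEdges at heI ⊢
            rw [Finset.mem_filter] at heI ⊢
            exact ⟨heI.1, fun v hv => hAS (heI.2 v hv)⟩
          · refine ⟨heT, ?_⟩
            unfold inducedEdges at heI ⊢
            rw [Finset.mem_filter] at heI ⊢
            exact ⟨heI.1, fun v hv => (Finset.mem_sdiff.1 (heI.2 v hv)).1⟩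
      have hdisj : Disjoint (Tf i ∩ inducedEdges G A)
          (Tf i ∩ inducedEdges G (S \ A)) := by
        rw [Finset.disjoint_left]
        intro e h1 h2
        induction e using Sym2.ind with
        | _ a b =>
        have h1' := (mem_inducedEdges_iff' (hindE _ _ (Finset.mem_inter.1 h1).2)).1
          (Finset.mem_inter.1 h1).2
        have h2' := (mem_inducedEdges_iff' (hindE _ _ (Finset.mem_inter.1 h2).2)).1
          (Finset.mem_inter.1 h2).2
        exact (Finset.mem_sdiff.1 h2'.1).2 h1'.1
      have c1 := hfor i hi A hA
      have c2 := hfor i hi (S \ A) hSA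
      have hcardsum : A.card + (S \ A).card = S.card := by
        rw [Finset.card_sdiff_of_subset hAS]
        have := Finset.card_le_card hAS
        omega
      have hcu : (Tf i ∩ inducedEdges G S).card ≤
          (Tf i ∩ inducedEdges G A).card + (Tf i ∩ inducedEdges G (S \ A)).card := by
        rw [hsplit, Finset.card_union_of_disjoint hdisj]
      have hNat : (Tf i ∩ inducedEdges G S).card + 2 ≤ S.card := by omega
      have h2 : ((Tf i ∩ inducedEdges G S).card + 2 : ℝ) ≤ (S.card : ℝ) := by
        exact_mod_cast hNat
      linarith
    calc ∑ i ∈ J, wt i * ((Tf i ∩ inducedEdges G S).card : ℝ)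
        ≤ ∑ i ∈ J, wt i * ((S.card : ℝ) - 2) :=
          Finset.sum_le_sum fun i hi => mul_le_mul_of_nonneg_left (hb i hi) (hJpos i hi).le
      _ = (S.card : ℝ) - 2 := by rw [← Finset.sum_mul, hw1J, one_mul]
  -- total edge weight
  have hXtotal : ∑ e ∈ G.edgeFinset, x e = (Fintype.card V : ℝ) - 1 := by
    rw [hXF]
    have hb : ∀ i ∈ J, ((Tf i ∩ G.edgeFinset).card : ℝ) = (Fintype.card V : ℝ) - 1 := by
      intro i hi
      have hsub : Tf i ⊆ G.edgeFinset := fun e he =>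
        SimpleGraph.mem_edgeFinset.2 ((hJtree i hi).1 he)
      rw [Finset.inter_eq_left.2 hsub]
      have htree := (hJtree i hi).2
      have hES : (SimpleGraph.fromEdgeSet ((Tf i : Set (Sym2 V)))).edgeSet
          = (Tf i : Set (Sym2 V)) := by
        rw [SimpleGraph.edgeSet_fromEdgeSet]
        ext e
        simp only [Set.mem_diff, Set.mem_setOf_eq, Finset.mem_coe, and_iff_left_iff_imp]
        intro he hd
        exact SimpleGraph.not_isDiag_of_mem_edgeSet G ((hJtree i hi).1 he) hd
      haveI : Fintype ((SimpleGraph.fromEdgeSet ((Tf i : Set (Sym2 V)))).edgeSet) := by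
        rw [hES]; exact FinsetCoe.fintype _
      have hEF : (SimpleGraph.fromEdgeSet ((Tf i : Set (Sym2 V)))).edgeFinset = Tf i := by
        apply Finset.coe_injective
        rw [SimpleGraph.coe_edgeFinset, hES]
      have hcardT := htree.card_edgeFinset
      rw [hEF] at hcardT
      have h2 : ((Tf i).card + 1 : ℝ) = (Fintype.card V : ℝ) := by exact_mod_cast hcardT
      linarith
    calc ∑ i ∈ J, wt i * ((Tf i ∩ G.edgeFinset).card : ℝ)
        = ∑ i ∈ J, wt i * ((Fintype.card V : ℝ) - 1) :=
          Finset.sum_congr rfl fun i hi => by rw [hb i hi]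
      _ = (Fintype.card V : ℝ) - 1 := by rw [← Finset.sum_mul, hw1J, one_mul]
  -- strict cut bounds
  have hcutlt : ∀ i, i ≤ k → ∑ e ∈ cut G (Vc i), x e < 2 := by
    intro i hik
    by_cases hi0 : i = 0
    · subst hi0; rw [hx00]; norm_num
    by_cases hikk : i = k
    · subst hikk; rw [hxkk]; norm_num
    · exact hxmid i (by omega) (by omega)
  -- degree condition per middle level
  have hcondlev : ∀ i, 1 ≤ i → i ≤ k →
      ∑ e ∈ cut G (level Vc k i), x e
        = 2 * ((level Vc k i).card : ℝ)
          - 2 * ∑ e ∈ inducedEdges G (level Vc k i), x e := by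
    intro i h1 h2
    have hh := handshake' G x (level Vc k i)
    have h3 := hxlev i h1 h2
    linarith
  have hcutlev_ge : ∀ i, 1 ≤ i → i ≤ k →
      (2:ℝ) ≤ ∑ e ∈ cut G (level Vc k i), x e := by
    intro i h1 h2
    rw [hcondlev i h1 h2]
    have := hXind (level Vc k i) (hLne i (by omega))
    linarith
  have hXunion : ∀ P Q : Finset (Sym2 V),
      ∑ e ∈ P ∪ Q, x e ≤ ∑ e ∈ P, x e + ∑ e ∈ Q, x e := by
    intro P Q
    have h := Finset.sum_union_inter (s₁ := P) (s₂ := Q) (f := x)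
    have h2 : 0 ≤ ∑ e ∈ P ∩ Q, x e := Finset.sum_nonneg fun e _ => hx0 e
    linarith
  have hXsub : ∀ P Q : Finset (Sym2 V), P ⊆ Q →
      ∑ e ∈ P, x e ≤ ∑ e ∈ Q, x e := fun P Q h =>
    Finset.sum_le_sum_of_subset_of_nonneg h (fun e _ _ => hx0 e)
  -- cut of the top level equals cut of V_k
  have hcut_sdiff : ∀ S : Finset V, cut G (Finset.univ \ S) = cut G S := by
    intro S
    ext e
    constructor
    · intro he
      have heE := hcutE _ _ he
      induction e using Sym2.ind with
      | _ a b =>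
      rcases (mem_cut_iff' heE).1 he with ⟨h1, h2⟩ | ⟨h1, h2⟩ <;>
        simp only [Finset.mem_sdiff, Finset.mem_univ, true_and, not_not] at h1 h2
      · exact (mem_cut_iff' heE).2 (Or.inr ⟨h2, h1⟩)
      · exact (mem_cut_iff' heE).2 (Or.inl ⟨h2, h1⟩)
    · intro he
      have heE := hcutE _ _ he
      induction e using Sym2.ind with
      | _ a b =>
      rcases (mem_cut_iff' heE).1 he with ⟨h1, h2⟩ | ⟨h1, h2⟩
      · refine (mem_cut_iff' heE).2 (Or.inr ⟨?_, ?_⟩) <;>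
          simp only [Finset.mem_sdiff, Finset.mem_univ, true_and, not_not] <;> tauto
      · refine (mem_cut_iff' heE).2 (Or.inl ⟨?_, ?_⟩) <;>
          simp only [Finset.mem_sdiff, Finset.mem_univ, true_and, not_not] <;> tauto
  have hleveltop : level Vc k (k+1) = Finset.univ \ Vc k := by
    unfold level
    rw [if_neg (by omega), if_neg (by omega)]
  -- the key global identity for the two end levels
  have hC5 : ∑ e ∈ inducedEdges G (level Vc k 0), x e
      + ∑ e ∈ inducedEdges G (level Vc k (k+1)), x e
      = ((level Vc k 0).card : ℝ) + ((level Vc k (k+1)).card : ℝ) - 2 := by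
    have hcutuniv : cut G Finset.univ = ∅ := by
      unfold cut cutBetween
      refine Finset.filter_false_of_mem ?_
      rintro e he ⟨u, v, _, _, hv⟩
      simp at hv
    have hinduniv : inducedEdges G Finset.univ = G.edgeFinset := by
      unfold inducedEdges
      exact Finset.filter_true_of_mem fun e _ => fun v _ => Finset.mem_univ v
    have htot : ∑ v, (∑ e ∈ cut G {v}, x e) = 2 * ((Fintype.card V : ℝ) - 1) := by
      have hu := handshake' G x Finset.univ
      rw [hcutuniv, hinduniv, hXtotal] at hu
      simpa using hu
    have hr : ∀ g : ℕ → ℝ, ∑ i ∈ Finset.range (k+2), g i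
        = g 0 + (∑ i ∈ Finset.range k, g (i+1)) + g (k+1) := by
      intro g
      rw [Finset.sum_range_succ, Finset.sum_range_succ']
      ring
    have hsplit := hsum_split (fun v => ∑ e ∈ cut G {v}, x e)
    rw [hr] at hsplit
    have hend0 : ∑ v ∈ level Vc k 0, ∑ e ∈ cut G {v}, x e
        = 2 * (∑ e ∈ inducedEdges G (level Vc k 0), x e) + 1 := by
      rw [handshake' G x (level Vc k 0), hlevel0, hx00]
    have hendtop : ∑ v ∈ level Vc k (k+1), ∑ e ∈ cut G {v}, x e
        = 2 * (∑ e ∈ inducedEdges G (level Vc k (k+1)), x e) + 1 := by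
      rw [handshake' G x (level Vc k (k+1)), hleveltop, hcut_sdiff, hxkk]
    have hmid : ∑ i ∈ Finset.range k, ∑ v ∈ level Vc k (i+1), ∑ e ∈ cut G {v}, x e
        = ∑ i ∈ Finset.range k, 2 * ((level Vc k (i+1)).card : ℝ) := by
      refine Finset.sum_congr rfl fun i hi => ?_
      exact hxlev (i+1) (by omega) (by have := Finset.mem_range.1 hi; omega)
    rw [htot, hend0, hendtop, hmid] at hsplit
    have hcardR : (Fintype.card V : ℝ) = ((level Vc k 0).card : ℝ)
        + (∑ i ∈ Finset.range k, ((level Vc k (i+1)).card : ℝ))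
        + ((level Vc k (k+1)).card : ℝ) := by
      have hc2 : ((Fintype.card V : ℝ))
          = ∑ i ∈ Finset.range (k+2), ((level Vc k i).card : ℝ) := by
        exact_mod_cast hcard_split
      rw [hc2]
      exact hr _
    have hmulsum : ∑ i ∈ Finset.range k, 2 * ((level Vc k (i+1)).card : ℝ)
        = 2 * ∑ i ∈ Finset.range k, ((level Vc k (i+1)).card : ℝ) := by
      rw [Finset.mul_sum]
    rw [hmulsum] at hsplit
    linarith [hsplit, hcardR]
  -- min and max level of an edge
  obtain ⟨lo, hlo⟩ : ∃ lo : Sym2 V → ℕ, ∀ a b, lo s(a,b) = min (lvl a) (lvl b) :=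
    ⟨Sym2.lift ⟨fun a b => min (lvl a) (lvl b), fun a b => min_comm _ _⟩, fun a b => rfl⟩
  obtain ⟨hi, hhi⟩ : ∃ hi : Sym2 V → ℕ, ∀ a b, hi s(a,b) = max (lvl a) (lvl b) :=
    ⟨Sym2.lift ⟨fun a b => max (lvl a) (lvl b), fun a b => max_comm _ _⟩, fun a b => rfl⟩
  have hlohi : ∀ e : Sym2 V, lo e ≤ hi e := by
    intro e
    induction e using Sym2.ind with
    | _ a b => rw [hlo, hhi]; exact min_le_max
  have hhitop : ∀ e : Sym2 V, hi e ≤ k + 1 := by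
    intro e
    induction e using Sym2.ind with
    | _ a b =>
      rw [hhi]
      exact max_le (hlvl_top a) (hlvl_top b)
  -- cut characterizations via lo/hi
  have hcutVc_eq : ∀ i, i ≤ k →
      cut G (Vc i) = G.edgeFinset.filter (fun e => lo e ≤ i ∧ i < hi e) := by
    intro i hik
    ext e
    constructor
    · intro he
      have heE := hcutE _ _ he
      induction e using Sym2.ind with
      | _ a b =>
      rw [Finset.mem_filter, hlo, hhi]
      refine ⟨heE, ?_⟩
      rcases (mem_cut_iff' heE).1 he with ⟨h1, h2⟩ | ⟨h1, h2⟩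
      · have ha := (hlvl_le a i hik).1 h1
        have hb : ¬ lvl b ≤ i := fun hh => h2 ((hlvl_le b i hik).2 hh)
        omega
      · have hb := (hlvl_le b i hik).1 h1
        have ha : ¬ lvl a ≤ i := fun hh => h2 ((hlvl_le a i hik).2 hh)
        omega
    · intro he
      rw [Finset.mem_filter] at he
      obtain ⟨heE, hcond⟩ := he
      induction e using Sym2.ind with
      | _ a b =>
      rw [hlo, hhi] at hcond
      refine (mem_cut_iff' heE).2 ?_
      rcases le_total (lvl a) (lvl b) with h | h
      · exact Or.inl ⟨(hlvl_le a i hik).2 (by omega),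
          fun hmem => by have := (hlvl_le b i hik).1 hmem; omega⟩
      · exact Or.inr ⟨(hlvl_le b i hik).2 (by omega),
          fun hmem => by have := (hlvl_le a i hik).1 hmem; omega⟩
  have hcutlev_eq : ∀ m, m ≤ k+1 →
      cut G (level Vc k m) = G.edgeFinset.filter
        (fun e => (lo e = m ∧ hi e ≠ m) ∨ (hi e = m ∧ lo e ≠ m)) := by
    intro m hmk
    ext e
    constructor
    · intro he
      have heE := hcutE _ _ he
      induction e using Sym2.ind with
      | _ a b =>
      rw [Finset.mem_filter, hlo, hhi]
      refine ⟨heE, ?_⟩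
      rcases (mem_cut_iff' heE).1 he with ⟨h1, h2⟩ | ⟨h1, h2⟩
      · have ha := (hlevel m hmk a).1 h1
        have hb : lvl b ≠ m := fun hh => h2 ((hlevel m hmk b).2 hh)
        omega
      · have hb := (hlevel m hmk b).1 h1
        have ha : lvl a ≠ m := fun hh => h2 ((hlevel m hmk a).2 hh)
        omega
    · intro he
      rw [Finset.mem_filter] at he
      obtain ⟨heE, hcond⟩ := he
      induction e using Sym2.ind with
      | _ a b =>
      rw [hlo, hhi] at hcond
      refine (mem_cut_iff' heE).2 ?_
      rcases le_total (lvl a) (lvl b) with h | h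
      · rcases hcond with ⟨h1, h2⟩ | ⟨h1, h2⟩
        · exact Or.inl ⟨(hlevel m hmk a).2 (by omega),
            fun hmem => by have := (hlevel m hmk b).1 hmem; omega⟩
        · exact Or.inr ⟨(hlevel m hmk b).2 (by omega),
            fun hmem => by have := (hlevel m hmk a).1 hmem; omega⟩
      · rcases hcond with ⟨h1, h2⟩ | ⟨h1, h2⟩
        · exact Or.inr ⟨(hlevel m hmk b).2 (by omega),
            fun hmem => by have := (hlevel m hmk a).1 hmem; omega⟩
        · exact Or.inl ⟨(hlevel m hmk a).2 (by omega),
            fun hmem => by have := (hlevel m hmk b).1 hmem; omega⟩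
  -- (E1) each level of the support graph is internally connected
  have hconnlev : ∀ m, m ≤ k+1 → ∀ A, A ⊆ level Vc k m → A.Nonempty →
      (level Vc k m \ A).Nonempty →
      ∃ a b, a ∈ A ∧ b ∈ level Vc k m \ A ∧ 0 < x s(a,b) := by
    intro m hm A hAsub hAne hBne
    by_contra hcon
    push_neg at hcon
    have hcon' : ∀ a b, a ∈ A → b ∈ level Vc k m \ A → ¬ 0 < x s(a,b) :=
      fun a b h1 h2 => not_lt.2 (hcon a b h1 h2)
    have hIle := hXind2 (level Vc k m) A hAsub hAne hBne hcon'
    by_cases hm0 : m = 0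
    · subst hm0
      have h1 := hXind (level Vc k (k+1)) (hLne (k+1) le_rfl)
      linarith [hC5]
    by_cases hmtop : m = k + 1
    · subst hmtop
      have h1 := hXind (level Vc k 0) (hLne 0 (by omega))
      linarith [hC5]
    have hm1 : 1 ≤ m := by omega
    have hmk : m ≤ k := by omega
    have hge4 : (4:ℝ) ≤ ∑ e ∈ cut G (level Vc k m), x e := by
      rw [hcondlev m hm1 hmk]
      linarith
    have hsub : cut G (level Vc k m) ⊆ cut G (Vc (m-1)) ∪ cut G (Vc m) := by
      intro e he
      rw [hcutlev_eq m hm, Finset.mem_filter] at he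
      obtain ⟨heE, hcond⟩ := he
      have := hlohi e
      rw [Finset.mem_union, hcutVc_eq (m-1) (by omega), hcutVc_eq m hmk,
        Finset.mem_filter, Finset.mem_filter]
      rcases hcond with ⟨h1, h2⟩ | ⟨h1, h2⟩
      · right; exact ⟨heE, by omega⟩
      · left; exact ⟨heE, by omega⟩
    have hle := hXsub _ _ hsub
    have hle2 := hXunion (cut G (Vc (m-1))) (cut G (Vc m))
    have hb1 := hcutlt (m-1) (by omega)
    have hb2 := hcutlt m hmk
    linarith
  -- (E2) support edges between consecutive levels
  have hconsec : ∀ i, i ≤ k → ∃ a b,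
      a ∈ level Vc k i ∧ b ∈ level Vc k (i+1) ∧ 0 < x s(a,b) := by
    intro i hik
    by_contra hcon
    push_neg at hcon
    have hzero : ∀ e ∈ G.edgeFinset.filter (fun e => lo e = i ∧ hi e = i+1), x e = 0 := by
      intro e he
      rw [Finset.mem_filter] at he
      obtain ⟨heE, h1, h2⟩ := he
      induction e using Sym2.ind with
      | _ a b =>
      rw [hlo] at h1
      rw [hhi] at h2
      rcases le_total (lvl a) (lvl b) with h | h
      · exact le_antisymm (hcon a b ((hlevel i (by omega) a).2 (by omega))
          ((hlevel (i+1) (by omega) b).2 (by omega))) (hx0 _)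
      · have hswap : x s(a,b) = x s(b,a) := by rw [Sym2.eq_swap]
        rw [hswap]
        exact le_antisymm (hcon b a ((hlevel i (by omega) b).2 (by omega))
          ((hlevel (i+1) (by omega) a).2 (by omega))) (hx0 _)
    have hZ0 : ∑ e ∈ G.edgeFinset.filter (fun e => lo e = i ∧ hi e = i+1), x e = 0 :=
      Finset.sum_eq_zero hzero
    by_cases hk0 : k = 0
    · have h1 : ∑ e ∈ cut G (Vc i), x e ≠ 0 := by
        have hii : i = 0 := by omega
        rw [hii, hx00]; norm_num
      obtain ⟨e, he, hxe⟩ := Finset.exists_ne_zero_of_sum_ne_zero h1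
      have hpos : 0 < x e := lt_of_le_of_ne (hx0 e) (Ne.symm hxe)
      rw [hcutVc_eq i hik, Finset.mem_filter] at he
      have htop' := hhitop e
      have hlh := hlohi e
      have hmem : e ∈ G.edgeFinset.filter (fun e => lo e = i ∧ hi e = i+1) := by
        rw [Finset.mem_filter]
        refine ⟨he.1, by omega, by omega⟩
      have := hzero e hmem
      linarith
    by_cases hi0 : i = 0
    · have hge2 := hcutlev_ge (i+1) (by omega) (by omega)
      have hsubZ : cut G (level Vc k (i+1)) ⊆
          (G.edgeFinset.filter (fun e => lo e = i ∧ hi e = i+1))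
          ∪ (G.edgeFinset.filter (fun e => lo e = i+1 ∧ i+2 ≤ hi e)) := by
        intro e he
        rw [hcutlev_eq (i+1) (by omega), Finset.mem_filter] at he
        obtain ⟨heE, hcond⟩ := he
        have := hlohi e
        rw [Finset.mem_union, Finset.mem_filter, Finset.mem_filter]
        rcases hcond with ⟨h1, h2⟩ | ⟨h1, h2⟩
        · right; exact ⟨heE, by omega⟩
        · left; exact ⟨heE, by omega⟩
      have hC2sub : (G.edgeFinset.filter (fun e => lo e = i+1 ∧ i+2 ≤ hi e))
          ⊆ cut G (Vc (i+1)) := by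
        intro e he
        rw [Finset.mem_filter] at he
        rw [hcutVc_eq (i+1) (by omega), Finset.mem_filter]
        exact ⟨he.1, by omega⟩
      have h3 := hXsub _ _ hsubZ
      have h4 := hXunion (G.edgeFinset.filter (fun e => lo e = i ∧ hi e = i+1))
        (G.edgeFinset.filter (fun e => lo e = i+1 ∧ i+2 ≤ hi e))
      have h5 := hXsub _ _ hC2sub
      have h6 := hcutlt (i+1) (by omega)
      linarith
    by_cases hik' : i = k
    · have hge2 := hcutlev_ge i (by omega) hik
      have hsubZ : cut G (level Vc k i) ⊆
          (G.edgeFinset.filter (fun e => lo e = i ∧ hi e = i+1))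
          ∪ (G.edgeFinset.filter (fun e => lo e < i ∧ hi e = i)) := by
        intro e he
        rw [hcutlev_eq i (by omega), Finset.mem_filter] at he
        obtain ⟨heE, hcond⟩ := he
        have h7 := hlohi e
        have h8 := hhitop e
        rw [Finset.mem_union, Finset.mem_filter, Finset.mem_filter]
        rcases hcond with ⟨h1, h2⟩ | ⟨h1, h2⟩
        · left; exact ⟨heE, by omega⟩
        · right; exact ⟨heE, by omega⟩
      have hD1sub : (G.edgeFinset.filter (fun e => lo e < i ∧ hi e = i))
          ⊆ cut G (Vc (i-1)) := by
        intro e he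
        rw [Finset.mem_filter] at he
        rw [hcutVc_eq (i-1) (by omega), Finset.mem_filter]
        exact ⟨he.1, by omega⟩
      have h3 := hXsub _ _ hsubZ
      have h4 := hXunion (G.edgeFinset.filter (fun e => lo e = i ∧ hi e = i+1))
        (G.edgeFinset.filter (fun e => lo e < i ∧ hi e = i))
      have h5 := hXsub _ _ hD1sub
      have h6 := hcutlt (i-1) (by omega)
      linarith
    · have hi1 : 1 ≤ i := by omega
      have hik2 : i + 1 ≤ k := by omega
      set A1 := G.edgeFinset.filter (fun e => lo e < i ∧ hi e = i) with hA1
      set A2 := G.edgeFinset.filter (fun e => lo e = i ∧ i+2 ≤ hi e) with hA2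
      set Z := G.edgeFinset.filter (fun e => lo e = i ∧ hi e = i+1) with hZd
      set B1 := G.edgeFinset.filter (fun e => lo e < i ∧ hi e = i+1) with hB1
      set B2 := G.edgeFinset.filter (fun e => lo e = i+1 ∧ i+2 ≤ hi e) with hB2
      have hsubA : cut G (level Vc k i) ⊆ A1 ∪ A2 ∪ Z := by
        intro e he
        rw [hcutlev_eq i (by omega), Finset.mem_filter] at he
        obtain ⟨heE, hcond⟩ := he
        have h7 := hlohi e
        have harith : (lo e < i ∧ hi e = i) ∨ (lo e = i ∧ i+2 ≤ hi e)
            ∨ (lo e = i ∧ hi e = i+1) := by omega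
        rcases harith with h | h | h
        · exact Finset.mem_union_left _ (Finset.mem_union_left _
            (by rw [hA1, Finset.mem_filter]; exact ⟨heE, h⟩))
        · exact Finset.mem_union_left _ (Finset.mem_union_right _
            (by rw [hA2, Finset.mem_filter]; exact ⟨heE, h⟩))
        · exact Finset.mem_union_right _
            (by rw [hZd, Finset.mem_filter]; exact ⟨heE, h⟩)
      have hsubB : cut G (level Vc k (i+1)) ⊆ B1 ∪ B2 ∪ Z := by
        intro e he
        rw [hcutlev_eq (i+1) (by omega), Finset.mem_filter] at he
        obtain ⟨heE, hcond⟩ := he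
        have h7 := hlohi e
        have harith : (lo e < i ∧ hi e = i+1) ∨ (lo e = i+1 ∧ i+2 ≤ hi e)
            ∨ (lo e = i ∧ hi e = i+1) := by omega
        rcases harith with h | h | h
        · exact Finset.mem_union_left _ (Finset.mem_union_left _
            (by rw [hB1, Finset.mem_filter]; exact ⟨heE, h⟩))
        · exact Finset.mem_union_left _ (Finset.mem_union_right _
            (by rw [hB2, Finset.mem_filter]; exact ⟨heE, h⟩))
        · exact Finset.mem_union_right _
            (by rw [hZd, Finset.mem_filter]; exact ⟨heE, h⟩)
      have hsubAB1 : A1 ∪ B1 ⊆ cut G (Vc (i-1)) := by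
        intro e he
        rw [hcutVc_eq (i-1) (by omega), Finset.mem_filter]
        rcases Finset.mem_union.1 he with h | h
        · rw [hA1, Finset.mem_filter] at h
          exact ⟨h.1, by omega⟩
        · rw [hB1, Finset.mem_filter] at h
          exact ⟨h.1, by omega⟩
      have hsubAB2 : A2 ∪ B2 ⊆ cut G (Vc (i+1)) := by
        intro e he
        rw [hcutVc_eq (i+1) (by omega), Finset.mem_filter]
        rcases Finset.mem_union.1 he with h | h
        · rw [hA2, Finset.mem_filter] at h
          exact ⟨h.1, by omega⟩
        · rw [hB2, Finset.mem_filter] at h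
          exact ⟨h.1, by omega⟩
      have hdis1 : Disjoint A1 B1 := by
        rw [Finset.disjoint_left]
        intro e h1 h2
        rw [hA1, Finset.mem_filter] at h1
        rw [hB1, Finset.mem_filter] at h2
        omega
      have hdis2 : Disjoint A2 B2 := by
        rw [Finset.disjoint_left]
        intro e h1 h2
        rw [hA2, Finset.mem_filter] at h1
        rw [hB2, Finset.mem_filter] at h2
        omega
      have hga := hcutlev_ge i hi1 (by omega)
      have hgb := hcutlev_ge (i+1) (by omega) hik2
      have h3 := hXsub _ _ hsubA
      have h3' := hXunion (A1 ∪ A2) Z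
      have h3'' := hXunion A1 A2
      have h4 := hXsub _ _ hsubB
      have h4' := hXunion (B1 ∪ B2) Z
      have h4'' := hXunion B1 B2
      have h5 := hXsub _ _ hsubAB1
      have h5' : ∑ e ∈ A1 ∪ B1, x e = ∑ e ∈ A1, x e + ∑ e ∈ B1, x e :=
        Finset.sum_union hdis1
      have h6 := hXsub _ _ hsubAB2
      have h6' : ∑ e ∈ A2 ∪ B2, x e = ∑ e ∈ A2, x e + ∑ e ∈ B2, x e :=
        Finset.sum_union hdis2
      have h7 := hcutlt (i-1) (by omega)
      have h8 := hcutlt (i+1) (by omega)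
      linarith [hZ0]
  -- assemble the Gao tree
  haveI : Nonempty V := ⟨v0⟩
  choose! af bf hcf using hconsec
  set Wfin : Finset (Sym2 V) :=
    (G.edgeFinset.filter (fun e => 0 < x e ∧ lo e = hi e))
      ∪ (Finset.range (k+1)).image (fun j => s(af j, bf j)) with hW
  have hWedge : ∀ e ∈ Wfin, e ∈ G.edgeFinset ∧ 0 < x e := by
    intro e he
    rw [hW, Finset.mem_union] at he
    rcases he with he | he
    · obtain ⟨h1, h2, _⟩ := Finset.mem_filter.1 he
      exact ⟨h1, h2⟩
    · obtain ⟨j, hj, rfl⟩ := Finset.mem_image.1 he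
      have hjk : j ≤ k := by have := Finset.mem_range.1 hj; omega
      obtain ⟨_, _, hpos⟩ := hcf j hjk
      exact ⟨hsupp_edge _ hpos, hpos⟩
  have hlevreach : ∀ m, m ≤ k+1 → ∀ u v, u ∈ level Vc k m → v ∈ level Vc k m →
      (SimpleGraph.fromEdgeSet (Wfin : Set (Sym2 V))).Reachable u v := by
    intro m hm u v hu hv
    by_contra hnr
    set A := (level Vc k m).filter
      (fun z => (SimpleGraph.fromEdgeSet (Wfin : Set (Sym2 V))).Reachable u z) with hA
    have huA : u ∈ A := by
      rw [hA, Finset.mem_filter]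
      exact ⟨hu, SimpleGraph.Reachable.refl u⟩
    have hvB : v ∈ level Vc k m \ A := by
      rw [Finset.mem_sdiff]
      refine ⟨hv, fun hvA => hnr ?_⟩
      rw [hA, Finset.mem_filter] at hvA
      exact hvA.2
    obtain ⟨a, b, haA, hbB, hxab⟩ := hconnlev m hm A
      (by rw [hA]; exact Finset.filter_subset _ _) ⟨u, huA⟩ ⟨v, hvB⟩
    rw [hA, Finset.mem_filter] at haA
    have hbL : b ∈ level Vc k m := (Finset.mem_sdiff.1 hbB).1
    have hEab : s(a,b) ∈ G.edgeFinset := hsupp_edge _ hxab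
    have hlohi' : lo s(a,b) = hi s(a,b) := by
      rw [hlo, hhi]
      have h1 := (hlevel m hm a).1 haA.1
      have h2 := (hlevel m hm b).1 hbL
      omega
    have hWmem : s(a,b) ∈ Wfin := by
      rw [hW, Finset.mem_union]
      exact Or.inl (Finset.mem_filter.2 ⟨hEab, hxab, hlohi'⟩)
    have hadj : (SimpleGraph.fromEdgeSet (Wfin : Set (Sym2 V))).Adj a b := by
      rw [SimpleGraph.fromEdgeSet_adj]
      exact ⟨by exact_mod_cast hWmem,
        (G.mem_edgeSet.1 (SimpleGraph.mem_edgeFinset.1 hEab)).ne⟩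
    exact (Finset.mem_sdiff.1 hbB).2 (by
      rw [hA, Finset.mem_filter]
      exact ⟨hbL, haA.2.trans hadj.reachable⟩)
  have ha0 : af 0 ∈ level Vc k 0 := (hcf 0 (Nat.zero_le k)).1
  have hchainreach : ∀ m, m ≤ k+1 → ∀ v, v ∈ level Vc k m →
      (SimpleGraph.fromEdgeSet (Wfin : Set (Sym2 V))).Reachable v (af 0) := by
    intro m
    induction m with
    | zero => exact fun _ v hv => hlevreach 0 (by omega) v (af 0) hv ha0
    | succ m ihm =>
      intro hm v hv
      have hm' : m ≤ k := by omega
      obtain ⟨haf, hbf, hxe⟩ := hcf m hm'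
      have h1 := hlevreach (m+1) hm v (bf m) hv hbf
      have hE : s(af m, bf m) ∈ G.edgeFinset := hsupp_edge _ hxe
      have hadj : (SimpleGraph.fromEdgeSet (Wfin : Set (Sym2 V))).Adj (af m) (bf m) := by
        rw [SimpleGraph.fromEdgeSet_adj]
        refine ⟨?_, (G.mem_edgeSet.1 (SimpleGraph.mem_edgeFinset.1 hE)).ne⟩
        have hmem : s(af m, bf m) ∈ Wfin := by
          rw [hW, Finset.mem_union]
          exact Or.inr (Finset.mem_image.2 ⟨m, Finset.mem_range.2 (by omega), rfl⟩)
        exact_mod_cast hmem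
      exact (h1.trans hadj.symm.reachable).trans (ihm (by omega) (af m) haf)
  have hKconn : (SimpleGraph.fromEdgeSet (Wfin : Set (Sym2 V))).Connected := by
    haveI : Nonempty V := ⟨v0⟩
    refine ⟨fun p q => ?_⟩
    have hp := hchainreach (lvl p) (hlvl_top p) p ((hlevel _ (hlvl_top p) p).2 rfl)
    have hq := hchainreach (lvl q) (hlvl_top q) q ((hlevel _ (hlvl_top q) q).2 rfl)
    exact hp.trans hq.symm
  obtain ⟨T, hTW, hTtree⟩ := exists_tree_subset' Wfin.card Wfin rfl hKconn
  refine ⟨T, ⟨⟨?_, hTtree⟩, ?_⟩, fun e he => (hWedge e (hTW he)).2⟩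
  · intro e he
    exact SimpleGraph.mem_edgeFinset.1 (hWedge e (hTW (by exact_mod_cast he))).1
  · intro i hik
    have hVine : (Vc i).Nonempty := ⟨v0, hVmono 0 i (Nat.zero_le i) hik hv0⟩
    have hVout : ∃ v, v ∉ Vc i := by
      obtain ⟨vt, _, hvt2⟩ := Finset.exists_of_ssubset htop
      exact ⟨vt, fun hmem => hvt2 (hVmono i k hik le_rfl hmem)⟩
    obtain ⟨a, b, habT, haV, hbV⟩ := exists_crossing_edge'
      (SimpleGraph.IsTree.isConnected hTtree) hVine hVout
    have hE : s(a,b) ∈ G.edgeFinset := (hWedge _ (hTW habT)).1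
    have hcutm : s(a,b) ∈ cut G (Vc i) := (mem_cut_iff' hE).2 (Or.inl ⟨haV, hbV⟩)
    have hne1 : (T ∩ cut G (Vc i)).Nonempty :=
      ⟨s(a,b), Finset.mem_inter.2 ⟨habT, hcutm⟩⟩
    have hsub1 : T ∩ cut G (Vc i) ⊆ {s(af i, bf i)} := by
      intro e heI
      obtain ⟨heT, hec⟩ := Finset.mem_inter.1 heI
      rw [hcutVc_eq i hik, Finset.mem_filter] at hec
      have hec2 := hec.2
      have heW := hTW heT
      rw [hW, Finset.mem_union] at heW
      rcases heW with hin | him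
      · exfalso
        obtain ⟨_, _, hlh⟩ := Finset.mem_filter.1 hin
        omega
      · obtain ⟨j, hj, rfl⟩ := Finset.mem_image.1 him
        have hjk : j ≤ k := by have := Finset.mem_range.1 hj; omega
        obtain ⟨haf, hbf, _⟩ := hcf j hjk
        have hl1 : lo s(af j, bf j) = j := by
          rw [hlo]
          have e1 := (hlevel j (by omega) (af j)).1 haf
          have e2 := (hlevel (j+1) (by omega) (bf j)).1 hbf
          omega
        have hl2 : hi s(af j, bf j) = j+1 := by
          rw [hhi]
          have e1 := (hlevel j (by omega) (af j)).1 haf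
          have e2 := (hlevel (j+1) (by omega) (bf j)).1 hbf
          omega
        have hji : j = i := by omega
        subst hji
        exact Finset.mem_singleton_self _
    rcases Finset.subset_singleton_iff.1 hsub1 with h0 | h1
    · rw [h0] at hne1
      exact absurd hne1 (by simp)
    · rw [h1]
      exact Finset.card_singleton _
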